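/- Let x be the 8×8 matrix from the preceding setup (with parameters a,…,g ∈ κ, char(κ) ≠ 2). Then x⁵ has (1,8) entry equal to b² (up to sign) and all other entries zero; in particular x⁵ = 0 if and only if b = 0. -/

import Mathlib

/-- The 8×8 matrix with first row (0,a,b,c,d,e,f,g), x₂₇ = 1, x₂₈ = f, x₃₄ = 1, x₃₈ = e,
x₄₅ = 1, x₄₈ = d, x₅₆ = −1, x₅₈ = −c, x₆₈ = −b, x₇₈ = −a, and all other entries 0. -/
def xmat8 (κ : Type*) [Field κ] (a b c d e f g : κ) : Matrix (Fin 8) (Fin 8) κ :=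
  !![0,a,b,c,d,e,f,g;
     0,0,0,0,0,0,1,f;
     0,0,0,1,0,0,0,e;
     0,0,0,0,1,0,0,d;
     0,0,0,0,0,-1,0,-c;
     0,0,0,0,0,0,0,-b;
     0,0,0,0,0,0,0,-a;
     0,0,0,0,0,0,0,0]

section vec
variable {α : Type*} (x0 x1 x2 x3 x4 x5 x6 x7 : α)
lemma v8_0 : ![x0,x1,x2,x3,x4,x5,x6,x7] (0:Fin 8) = x0 := rfl
lemma v8_1 : ![x0,x1,x2,x3,x4,x5,x6,x7] (1:Fin 8) = x1 := rfl
lemma v8_2 : ![x0,x1,x2,x3,x4,x5,x6,x7] (2:Fin 8) = x2 := rfl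
lemma v8_3 : ![x0,x1,x2,x3,x4,x5,x6,x7] (3:Fin 8) = x3 := rfl
lemma v8_4 : ![x0,x1,x2,x3,x4,x5,x6,x7] (4:Fin 8) = x4 := rfl
lemma v8_5 : ![x0,x1,x2,x3,x4,x5,x6,x7] (5:Fin 8) = x5 := rfl
lemma v8_6 : ![x0,x1,x2,x3,x4,x5,x6,x7] (6:Fin 8) = x6 := rfl
lemma v8_7 : ![x0,x1,x2,x3,x4,x5,x6,x7] (7:Fin 8) = x7 := rfl
lemma w2_1 (x:α)(u:Fin 1→α) : Matrix.vecCons x u (1:Fin 2) = u 0 := rfl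
lemma w3_1 (x:α)(u:Fin 2→α) : Matrix.vecCons x u (1:Fin 3) = u 0 := rfl
lemma w3_2 (x:α)(u:Fin 2→α) : Matrix.vecCons x u (2:Fin 3) = u 1 := rfl
lemma w4_1 (x:α)(u:Fin 3→α) : Matrix.vecCons x u (1:Fin 4) = u 0 := rfl
lemma w4_2 (x:α)(u:Fin 3→α) : Matrix.vecCons x u (2:Fin 4) = u 1 := rfl
lemma w4_3 (x:α)(u:Fin 3→α) : Matrix.vecCons x u (3:Fin 4) = u 2 := rfl
lemma w5_1 (x:α)(u:Fin 4→α) : Matrix.vecCons x u (1:Fin 5) = u 0 := rfl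
lemma w5_2 (x:α)(u:Fin 4→α) : Matrix.vecCons x u (2:Fin 5) = u 1 := rfl
lemma w5_3 (x:α)(u:Fin 4→α) : Matrix.vecCons x u (3:Fin 5) = u 2 := rfl
lemma w5_4 (x:α)(u:Fin 4→α) : Matrix.vecCons x u (4:Fin 5) = u 3 := rfl
lemma w6_1 (x:α)(u:Fin 5→α) : Matrix.vecCons x u (1:Fin 6) = u 0 := rfl
lemma w6_2 (x:α)(u:Fin 5→α) : Matrix.vecCons x u (2:Fin 6) = u 1 := rfl
lemma w6_3 (x:α)(u:Fin 5→α) : Matrix.vecCons x u (3:Fin 6) = u 2 := rfl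
lemma w6_4 (x:α)(u:Fin 5→α) : Matrix.vecCons x u (4:Fin 6) = u 3 := rfl
lemma w6_5 (x:α)(u:Fin 5→α) : Matrix.vecCons x u (5:Fin 6) = u 4 := rfl
lemma w7_1 (x:α)(u:Fin 6→α) : Matrix.vecCons x u (1:Fin 7) = u 0 := rfl
lemma w7_2 (x:α)(u:Fin 6→α) : Matrix.vecCons x u (2:Fin 7) = u 1 := rfl
lemma w7_3 (x:α)(u:Fin 6→α) : Matrix.vecCons x u (3:Fin 7) = u 2 := rfl
lemma w7_4 (x:α)(u:Fin 6→α) : Matrix.vecCons x u (4:Fin 7) = u 3 := rfl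
lemma w7_5 (x:α)(u:Fin 6→α) : Matrix.vecCons x u (5:Fin 7) = u 4 := rfl
lemma w7_6 (x:α)(u:Fin 6→α) : Matrix.vecCons x u (6:Fin 7) = u 5 := rfl
lemma w8_1 (x:α)(u:Fin 7→α) : Matrix.vecCons x u (1:Fin 8) = u 0 := rfl
lemma w8_2 (x:α)(u:Fin 7→α) : Matrix.vecCons x u (2:Fin 8) = u 1 := rfl
lemma w8_3 (x:α)(u:Fin 7→α) : Matrix.vecCons x u (3:Fin 8) = u 2 := rfl
lemma w8_4 (x:α)(u:Fin 7→α) : Matrix.vecCons x u (4:Fin 8) = u 3 := rfl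
lemma w8_5 (x:α)(u:Fin 7→α) : Matrix.vecCons x u (5:Fin 8) = u 4 := rfl
lemma w8_6 (x:α)(u:Fin 7→α) : Matrix.vecCons x u (6:Fin 8) = u 5 := rfl
lemma w8_7 (x:α)(u:Fin 7→α) : Matrix.vecCons x u (7:Fin 8) = u 6 := rfl
end vec

section aux
variable {κ : Type*} [Field κ] (a b c d e f g : κ)

set_option maxHeartbeats 4000000 in
lemma sq8 : (xmat8 κ a b c d e f g) * (xmat8 κ a b c d e f g) =
    !![0,0,0,b,c,-d,a,0;
       0,0,0,0,0,0,0,-a;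
       0,0,0,0,1,0,0,d;
       0,0,0,0,0,-1,0,-c;
       0,0,0,0,0,0,0,b;
       0,0,0,0,0,0,0,0;
       0,0,0,0,0,0,0,0;
       0,0,0,0,0,0,0,0] := by
  ext i j
  fin_cases i <;> fin_cases j <;>
    simp [xmat8, Matrix.mul_apply, Fin.sum_univ_eight,
      v8_0, v8_1, v8_2, v8_3, v8_4, v8_5, v8_6, v8_7, w2_1, w3_1, w3_2, w4_1, w4_2, w4_3, w5_1, w5_2, w5_3, w5_4, w6_1, w6_2, w6_3, w6_4, w6_5, w7_1, w7_2, w7_3, w7_4, w7_5, w7_6, w8_1, w8_2, w8_3, w8_4, w8_5, w8_6, w8_7, Matrix.vecHead, Matrix.vecTail] <;> ring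

set_option maxHeartbeats 4000000 in
lemma pow4_8 : (!![0,0,0,b,c,-d,a,0;
       0,0,0,0,0,0,0,-a;
       0,0,0,0,1,0,0,d;
       0,0,0,0,0,-1,0,-c;
       0,0,0,0,0,0,0,b;
       0,0,0,0,0,0,0,0;
       0,0,0,0,0,0,0,0;
       0,0,0,0,0,0,0,0] : Matrix (Fin 8) (Fin 8) κ) *
    !![0,0,0,b,c,-d,a,0;
       0,0,0,0,0,0,0,-a;
       0,0,0,0,1,0,0,d;
       0,0,0,0,0,-1,0,-c;
       0,0,0,0,0,0,0,b;
       0,0,0,0,0,0,0,0;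
       0,0,0,0,0,0,0,0;
       0,0,0,0,0,0,0,0] =
    !![0,0,0,0,0,-b,0,0;
       0,0,0,0,0,0,0,0;
       0,0,0,0,0,0,0,b;
       0,0,0,0,0,0,0,0;
       0,0,0,0,0,0,0,0;
       0,0,0,0,0,0,0,0;
       0,0,0,0,0,0,0,0;
       0,0,0,0,0,0,0,0] := by
  ext i j
  fin_cases i <;> fin_cases j <;>
    simp [Matrix.mul_apply, Fin.sum_univ_eight,
      v8_0, v8_1, v8_2, v8_3, v8_4, v8_5, v8_6, v8_7, w2_1, w3_1, w3_2, w4_1, w4_2, w4_3, w5_1, w5_2, w5_3, w5_4, w6_1, w6_2, w6_3, w6_4, w6_5, w7_1, w7_2, w7_3, w7_4, w7_5, w7_6, w8_1, w8_2, w8_3, w8_4, w8_5, w8_6, w8_7, Matrix.vecHead, Matrix.vecTail] <;> ring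

set_option maxHeartbeats 4000000 in
lemma pow5_8 : (!![0,0,0,0,0,-b,0,0;
       0,0,0,0,0,0,0,0;
       0,0,0,0,0,0,0,b;
       0,0,0,0,0,0,0,0;
       0,0,0,0,0,0,0,0;
       0,0,0,0,0,0,0,0;
       0,0,0,0,0,0,0,0;
       0,0,0,0,0,0,0,0] : Matrix (Fin 8) (Fin 8) κ) * (xmat8 κ a b c d e f g) =
    Matrix.single (0 : Fin 8) (7 : Fin 8) (b ^ 2) := by
  ext i j
  fin_cases i <;> fin_cases j <;>
    simp [xmat8, Matrix.mul_apply, Fin.sum_univ_eight, Matrix.single,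
      v8_0, v8_1, v8_2, v8_3, v8_4, v8_5, v8_6, v8_7, w2_1, w3_1, w3_2, w4_1, w4_2, w4_3, w5_1, w5_2, w5_3, w5_4, w6_1, w6_2, w6_3, w6_4, w6_5, w7_1, w7_2, w7_3, w7_4, w7_5, w7_6, w8_1, w8_2, w8_3, w8_4, w8_5, w8_6, w8_7, Matrix.vecHead, Matrix.vecTail] <;> ring

lemma pow5_eq : (xmat8 κ a b c d e f g) ^ 5 =
    Matrix.single (0 : Fin 8) (7 : Fin 8) (b ^ 2) := by
  have h5 : (xmat8 κ a b c d e f g) ^ 5 =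
      ((xmat8 κ a b c d e f g) * (xmat8 κ a b c d e f g)) *
      ((xmat8 κ a b c d e f g) * (xmat8 κ a b c d e f g)) * (xmat8 κ a b c d e f g) := by
    rw [show (5:ℕ) = 2*2+1 from rfl, pow_succ, pow_mul, sq, sq]
  rw [h5, sq8, pow4_8, pow5_8]

end aux

/-- x⁵ is the matrix whose only possibly-nonzero entry is ±b² in position (1,8);
in particular x⁵ = 0 iff b = 0. -/
theorem stmt10 (κ : Type*) [Field κ] (h2 : (2 : κ) ≠ 0) (a b c d e f g : κ) :
    ((xmat8 κ a b c d e f g) ^ 5 = Matrix.single (0 : Fin 8) (7 : Fin 8) (b ^ 2) ∨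
     (xmat8 κ a b c d e f g) ^ 5 = -Matrix.single (0 : Fin 8) (7 : Fin 8) (b ^ 2)) ∧
    ((xmat8 κ a b c d e f g) ^ 5 = 0 ↔ b = 0) := by
  have h := pow5_eq a b c d e f g (κ := κ)
  refine ⟨Or.inl h, ?_, ?_⟩
  · intro h0
    rw [h0] at h
    have := congrFun (congrFun h.symm (0 : Fin 8)) (7 : Fin 8)
    rw [Matrix.single_apply_same, Matrix.zero_apply] at this
    exact pow_eq_zero_iff (two_ne_zero) |>.mp this
  · intro hb
    rw [h, hb]
    simp
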